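/- Let A and B be complex n×n matrices satisfying AB = ωBA, where ω is a primitive q-th root of unity. Then A^q + B^q = (A + B)^q. -/

import Mathlib

noncomputable def gb (ω : ℂ) : ℕ → ℕ → ℂ
  | 0, 0 => 1
  | 0, _+1 => 0
  | _+1, 0 => 1
  | m+1, k+1 => gb ω m k + ω^(k+1) * gb ω m (k+1)

lemma gb_zero (ω : ℂ) (m : ℕ) : gb ω m 0 = 1 := by
  cases m <;> rfl

lemma gb_of_gt (ω : ℂ) : ∀ m k, m < k → gb ω m k = 0 := by
  intro m
  induction m with
  | zero => intro k hk; match k, hk with | k+1, _ => rfl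
  | succ m ih =>
    intro k hk
    match k, hk with
    | k+1, hk =>
      show gb ω m k + ω^(k+1) * gb ω m (k+1) = 0
      rw [ih k (by omega), ih (k+1) (by omega)]; ring

lemma gb_self (ω : ℂ) : ∀ m, gb ω m m = 1 := by
  intro m
  induction m with
  | zero => rfl
  | succ m ih =>
    show gb ω m m + ω^(m+1) * gb ω m (m+1) = 1
    rw [ih, gb_of_gt ω m (m+1) (by omega)]; ring

noncomputable def qint (ω : ℂ) (i : ℕ) : ℂ := ∑ j ∈ Finset.range i, ω^j

noncomputable def qfac (ω : ℂ) (m : ℕ) : ℂ := ∏ i ∈ Finset.range m, qint ω (i+1)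

lemma qint_add (ω : ℂ) (a b : ℕ) : qint ω (a + b) = qint ω a + ω^a * qint ω b := by
  unfold qint
  rw [Finset.sum_range_add, Finset.mul_sum]
  congr 1
  exact Finset.sum_congr rfl (fun i _ => (pow_add ω a i))

lemma qfac_succ (ω : ℂ) (m : ℕ) : qfac ω (m+1) = qfac ω m * qint ω (m+1) :=
  Finset.prod_range_succ _ m

lemma gb_mul_qfac (ω : ℂ) : ∀ m k, k ≤ m →
    gb ω m k * qfac ω k * qfac ω (m - k) = qfac ω m := by
  intro m
  induction m with
  | zero => intro k hk; interval_cases k; simp [gb, qfac]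
  | succ m ih =>
    intro k hk
    match k with
    | 0 => simp [gb_zero, qfac]
    | j+1 =>
      show (gb ω m j + ω^(j+1) * gb ω m (j+1)) * qfac ω (j+1) * qfac ω (m+1-(j+1)) = _
      rcases eq_or_lt_of_le (Nat.succ_le_succ_iff.mp hk) with hjm | hjm
      · subst hjm
        rw [gb_of_gt ω j (j+1) (by omega), gb_self]
        simp [qfac]
      · have h1 := ih j (by omega)
        have h2 := ih (j+1) (by omega)
        have e1 : m + 1 - (j+1) = (m - (j+1)) + 1 := by omega
        have e2 : m - j = (m - (j+1)) + 1 := by omega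
        have e3 : m + 1 = (j + 1) + (m - j) := by omega
        rw [e1, qfac_succ ω j, qfac_succ ω (m-(j+1))]
        rw [e2] at h1
        calc (gb ω m j + ω^(j+1) * gb ω m (j+1)) * (qfac ω j * qint ω (j+1)) *
              (qfac ω (m-(j+1)) * qint ω (m-(j+1)+1))
            = qint ω (j+1) * (gb ω m j * qfac ω j * (qfac ω (m-(j+1)) * qint ω (m-(j+1)+1)))
              + ω^(j+1) * qint ω (m-(j+1)+1) *
                (gb ω m (j+1) * (qfac ω j * qint ω (j+1)) * qfac ω (m-(j+1))) := by ring
          _ = qint ω (j+1) * qfac ω m + ω^(j+1) * qint ω (m-(j+1)+1) * qfac ω m := by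
              rw [← qfac_succ ω (m-(j+1)), h1, ← qfac_succ ω j, h2]
          _ = qfac ω (m+1) := by
              have e4 : m - (j+1) + 1 = m - j := by omega
              have key : qint ω (m+1) = qint ω (j+1) + ω^(j+1) * qint ω (m-j) := by
                conv_lhs => rw [e3, qint_add]
              rw [qfac_succ ω m, key, e4]; ring

lemma qint_ne_zero {ω : ℂ} {q : ℕ} (hω : IsPrimitiveRoot ω q) (i : ℕ)
    (h1 : 1 ≤ i) (h2 : i < q) : qint ω i ≠ 0 := by
  have hq2 : 1 < q := lt_of_le_of_lt h1 h2
  have hω1 : ω ≠ 1 := hω.ne_one hq2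
  rw [qint, geom_sum_eq hω1]
  exact div_ne_zero (sub_ne_zero.mpr (hω.pow_ne_one_of_pos_of_lt (by omega) h2))
    (sub_ne_zero.mpr hω1)

lemma qfac_ne_zero {ω : ℂ} {q : ℕ} (hω : IsPrimitiveRoot ω q) (k : ℕ) (hk : k < q) :
    qfac ω k ≠ 0 := by
  rw [qfac, Finset.prod_ne_zero_iff]
  intro i hi
  exact qint_ne_zero hω (i+1) (by omega) (by have := Finset.mem_range.mp hi; omega)

lemma gb_middle {ω : ℂ} {q : ℕ} (hω : IsPrimitiveRoot ω q) (k : ℕ)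
    (h0 : 0 < k) (hk : k < q) : gb ω q k = 0 := by
  have hq2 : 1 < q := lt_of_le_of_lt h0 hk
  have hfq : qfac ω q = 0 := by
    rw [qfac]
    refine Finset.prod_eq_zero (Finset.mem_range.mpr (show q - 1 < q by omega)) ?_
    rw [show q - 1 + 1 = q by omega]
    exact hω.geom_sum_eq_zero hq2
  have hf := gb_mul_qfac ω q k (le_of_lt hk)
  rw [hfq] at hf
  have := mul_ne_zero (qfac_ne_zero hω k hk) (qfac_ne_zero hω (q-k) (by omega))
  rcases mul_eq_zero.mp (by rw [mul_assoc] at hf; exact hf) with h | h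
  · exact h
  · exact absurd h this

lemma swap_pow {n : ℕ} (ω : ℂ) (A B : Matrix (Fin n) (Fin n) ℂ)
    (h : A * B = ω • (B * A)) : ∀ k : ℕ, A * B ^ k = ω ^ k • (B ^ k * A) := by
  intro k
  induction k with
  | zero => simp
  | succ k ih =>
    rw [pow_succ, ← mul_assoc, ih, Matrix.smul_mul, mul_assoc, h, Matrix.mul_smul,
      smul_smul, ← pow_succ, ← mul_assoc, ← pow_succ]

lemma expand_pow {n : ℕ} (ω : ℂ) (A B : Matrix (Fin n) (Fin n) ℂ)
    (h : A * B = ω • (B * A)) : ∀ m : ℕ,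
    (A + B) ^ m = ∑ k ∈ Finset.range (m+1), gb ω m k • (B ^ k * A ^ (m - k)) := by
  intro m
  induction m with
  | zero => simp [gb]
  | succ m ih =>
    have hswap := swap_pow ω A B h
    rw [pow_succ', ih, Finset.mul_sum]
    have step : ∀ k ∈ Finset.range (m+1), (A + B) * (gb ω m k • (B ^ k * A ^ (m - k)))
        = (ω ^ k * gb ω m k) • (B ^ k * A ^ (m + 1 - k))
          + gb ω m k • (B ^ (k+1) * A ^ (m - k)) := by
      intro k hk
      have hkm : k ≤ m := by have := Finset.mem_range.mp hk; omega
      have key : (A + B) * (B ^ k * A ^ (m - k))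
          = ω ^ k • (B ^ k * A ^ (m + 1 - k)) + B ^ (k+1) * A ^ (m - k) := by
        rw [add_mul, ← mul_assoc, hswap k, ← mul_assoc B, ← pow_succ']
        rw [Matrix.smul_mul, mul_assoc, ← pow_succ']
        rw [show m - k + 1 = m + 1 - k by omega]
      rw [mul_smul_comm, key, smul_add, smul_smul, mul_comm (gb ω m k) (ω ^ k)]
    rw [Finset.sum_congr rfl step, Finset.sum_add_distrib,
        Finset.sum_range_succ' (fun i => (ω ^ i * gb ω m i) • (B ^ i * A ^ (m + 1 - i))) m,
        Finset.sum_range_succ' (fun i => gb ω (m+1) i • (B ^ i * A ^ (m + 1 - i))) (m+1)]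
    simp only [Nat.succ_sub_succ, Nat.add_sub_cancel, pow_zero, one_mul, gb_zero,
      Matrix.one_mul, one_smul, Nat.sub_zero]
    have hext : ∑ i ∈ Finset.range (m+1), (ω ^ (i+1) * gb ω m (i+1)) • (B ^ (i+1) * A ^ (m - i))
        = ∑ i ∈ Finset.range m, (ω ^ (i+1) * gb ω m (i+1)) • (B ^ (i+1) * A ^ (m - i)) := by
      rw [Finset.sum_range_succ, gb_of_gt ω m (m+1) (by omega)]
      simp
    rw [← hext, add_right_comm, ← Finset.sum_add_distrib]
    have merge : ∀ i ∈ Finset.range (m+1),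
        (ω ^ (i+1) * gb ω m (i+1)) • (B ^ (i+1) * A ^ (m - i))
          + gb ω m i • (B ^ (i+1) * A ^ (m - i))
        = gb ω (m+1) (i+1) • (B ^ (i+1) * A ^ (m - i)) := by
      intro i _
      rw [← add_smul]
      congr 1
      show ω ^ (i+1) * gb ω m (i+1) + gb ω m i = gb ω m i + ω ^ (i+1) * gb ω m (i+1)
      ring
    rw [Finset.sum_congr rfl merge]

theorem potter (n q : ℕ) (hq : 1 ≤ q) (ω : ℂ) (hω : IsPrimitiveRoot ω q)
    (A B : Matrix (Fin n) (Fin n) ℂ) (h : A * B = ω • (B * A)) :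
    A ^ q + B ^ q = (A + B) ^ q := by
  rw [expand_pow ω A B h q]
  rw [Finset.sum_range_succ, gb_self, Nat.sub_self, pow_zero, Matrix.mul_one, one_smul]
  obtain ⟨m, rfl⟩ := Nat.exists_eq_succ_of_ne_zero (show q ≠ 0 by omega)
  rw [Finset.sum_range_succ' (fun k => gb ω (m+1) k • (B ^ k * A ^ (m + 1 - k))) m]
  simp only [gb_zero, pow_zero, Matrix.one_mul, one_smul, Nat.sub_zero]
  have : ∀ i ∈ Finset.range m, gb ω (m+1) (i+1) • (B ^ (i+1) * A ^ (m + 1 - (i+1))) = 0 := by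
    intro i hi
    have hi' := Finset.mem_range.mp hi
    rw [gb_middle hω (i+1) (by omega) (by omega), zero_smul]
  rw [Finset.sum_congr rfl this]
  simp [add_comm]
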